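/- Let d ≥ 2 and n ≥ 1, and let (G_i)_{i=1}^n be a GSIC POVM with n elements on ℂ^d with constants a and b. Then a ≥ d/n², and if a = d/n² then every G_i equals (1/n)·I. -/

import Mathlib

open scoped ComplexOrder
open Matrix

lemma herm_trace_sq (d : ℕ) (A : Matrix (Fin d) (Fin d) ℂ) (hA : Aᴴ = A) :
    ∃ r : ℝ, 0 ≤ r ∧ (A * A).trace = (r : ℂ) ∧ (r = 0 → A = 0) := by
  refine ⟨∑ j, ∑ k, Complex.normSq (A k j),
    Finset.sum_nonneg fun j _ => Finset.sum_nonneg fun k _ => Complex.normSq_nonneg _, ?_, ?_⟩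
  · nth_rewrite 1 [← hA]
    simp only [Matrix.trace, Matrix.diag, Matrix.mul_apply, Matrix.conjTranspose_apply]
    push_cast
    refine Finset.sum_congr rfl fun j _ => Finset.sum_congr rfl fun k _ => ?_
    rw [mul_comm]
    exact Complex.mul_conj _
  · intro hr
    have h0 : ∀ j ∈ Finset.univ, (∑ k, Complex.normSq (A k j)) = 0 := by
      intro j _
      have := (Finset.sum_eq_zero_iff_of_nonneg
        (fun j _ => Finset.sum_nonneg fun k _ => Complex.normSq_nonneg _)).mp hr
      exact this j (Finset.mem_univ j)
    ext k j
    have := (Finset.sum_eq_zero_iff_of_nonneg (fun k _ => Complex.normSq_nonneg _)).mp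
      (h0 j (Finset.mem_univ j)) k (Finset.mem_univ k)
    simpa using Complex.normSq_eq_zero.mp this

/-- For a GSIC POVM `(G i)_{i=1}^n` on `ℂ^d` with constants `a`, `b`,
we have `a ≥ d/n²`, and if `a = d/n²` then every `G i` equals `(1/n) • I`. -/
theorem gsic_purity_lower_bound (d n : ℕ) (hd : 2 ≤ d) (hn : 1 ≤ n)
    (G : Fin n → Matrix (Fin d) (Fin d) ℂ)
    (hpsd : ∀ i, (G i).PosSemidef)
    (hsum : ∑ i, G i = 1)
    (a b : ℝ)
    (ha : ∀ i, (G i * G i).trace = (a : ℂ))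
    (hb : ∀ i j, i ≠ j → (G i * G j).trace = (b : ℂ)) :
    (d : ℝ) / n ^ 2 ≤ a ∧
      (a = (d : ℝ) / n ^ 2 → ∀ i, G i = (1 / (n : ℂ)) • (1 : Matrix (Fin d) (Fin d) ℂ)) := by
  have hn0 : (n : ℝ) ≠ 0 := by positivity
  have hnC : (n : ℂ) ≠ 0 := by exact_mod_cast Nat.cast_ne_zero.mpr (by omega)
  set c : ℂ := 1 / (n : ℂ) with hc
  set H : Fin n → Matrix (Fin d) (Fin d) ℂ := fun i => G i - c • 1 with hH
  have hherm : ∀ i, (H i)ᴴ = H i := by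
    intro i
    simp [hH, Matrix.conjTranspose_smul, (hpsd i).isHermitian.eq, hc, ← Complex.ofReal_natCast,
      ← Complex.ofReal_one, ← Complex.ofReal_div]
  choose r hr0 hrt hrz using fun i => herm_trace_sq d (H i) (hherm i)
  -- trace of G i
  have htrG : ∑ i, (G i).trace = (d : ℂ) := by
    rw [← Matrix.trace_sum, hsum, Matrix.trace_one]
    simp
  have hexp : ∀ i, ((H i) * (H i)).trace
      = (a : ℂ) - 2 * c * (G i).trace + c * c * d := by
    intro i
    have : (H i) * (H i) = G i * G i - c • G i - c • G i + (c * c) • 1 := by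
      simp only [hH, Matrix.sub_mul, Matrix.mul_sub, Matrix.smul_mul, Matrix.mul_smul,
        smul_smul, smul_sub, smul_add, Matrix.mul_one, Matrix.one_mul]
      abel
    rw [this]
    simp [Matrix.trace_sub, Matrix.trace_add, Matrix.trace_smul, ha i, Matrix.trace_one]
    ring
  have hsumtr : ((∑ i, r i : ℝ) : ℂ) = (n : ℂ) * a - (d : ℂ) / n := by
    push_cast
    rw [Finset.sum_congr rfl (fun i _ => (hrt i).symm)]
    rw [Finset.sum_congr rfl (fun i _ => hexp i)]
    rw [Finset.sum_add_distrib, Finset.sum_sub_distrib, ← Finset.mul_sum, htrG]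
    simp only [Finset.sum_const, Finset.card_univ, Fintype.card_fin, nsmul_eq_mul]
    field_simp [hc]
    rw [hc]
    field_simp
    ring
  have hsumtrR : (∑ i, r i : ℝ) = n * a - d / n := by
    have : ((∑ i, r i : ℝ) : ℂ) = (((n : ℝ) * a - d / n : ℝ) : ℂ) := by
      rw [hsumtr]; push_cast; ring
    exact_mod_cast this
  have hsumnn : 0 ≤ (∑ i, r i : ℝ) := Finset.sum_nonneg fun i _ => hr0 i
  constructor
  · rw [hsumtrR] at hsumnn
    rw [div_le_iff₀ (by positivity)]
    have hnpos : (0:ℝ) < n := by positivity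
    have h1 : (d:ℝ)/n ≤ n*a := by linarith
    have h2 := mul_le_mul_of_nonneg_right h1 hnpos.le
    rw [div_mul_cancel₀ _ hn0] at h2
    nlinarith [h2]
  · intro haeq i
    have hz : (∑ i, r i : ℝ) = 0 := by
      rw [hsumtrR, haeq]
      field_simp
      ring
    have := (Finset.sum_eq_zero_iff_of_nonneg (fun i _ => hr0 i)).mp hz i (Finset.mem_univ i)
    have hHi := hrz i this
    have : G i = c • 1 := by
      have := sub_eq_zero.mp hHi
      exact this
    simpa [hc] using this
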